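/- Let Q be an abelian group and η: Q×Q→ℂ× a function such that (a) μ(i,j,k) := η(i+j,k)⁻¹η(i,k)η(j,k) is multiplicative in k (i.e. μ(i,j,k+l)=μ(i,j,k)μ(i,j,l)), (b) there exists a bilinear map Δ: Q×Q→ℂ/ℤ with η(i,j)η(j,i)=e^{-2πiΔ(i,j)}, and (c) η(i,0)=η(0,i)=1 for all i ∈ Q. Then (μ, η) is a normalized abelian 3-cocycle satisfying μ(i,j,k)=μ(j,i,k) for all i,j,k ∈ Q. -/

import Mathlib

open Complex

/-- If `η : Q × Q → ℂˣ` satisfies: (a) `μ(i,j,k) := η(i+j,k)⁻¹ η(i,k) η(j,k)` is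
multiplicative in `k`, (b) `η(i,j)η(j,i) = e^{-2πiΔ(i,j)}` for a bilinear map
`Δ : Q × Q → ℂ/ℤ` (realized by `Δ : Q × Q → ℂ` which is symmetric and biadditive
modulo `ℤ`), and (c) `η(i,0) = η(0,i) = 1`, then `(μ, η)` is a normalized abelian
3-cocycle with `μ(i,j,k) = μ(j,i,k)`. -/
theorem quasi_eta_gives_na3 (Q : Type*) [AddCommGroup Q]
    (η : Q → Q → ℂˣ)
    (μ : Q → Q → Q → ℂˣ)
    (hμ : ∀ i j k : Q, μ i j k = (η (i + j) k)⁻¹ * η i k * η j k)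
    (ha : ∀ i j k l : Q, μ i j (k + l) = μ i j k * μ i j l)
    (Δ : Q → Q → ℂ)
    (hΔsym : ∀ i j : Q, ∃ m : ℤ, Δ i j = Δ j i + m)
    (hΔbil : ∀ i j k : Q, (∃ m : ℤ, Δ (i + j) k = Δ i k + Δ j k + m) ∧
      (∃ m : ℤ, Δ i (j + k) = Δ i j + Δ i k + m))
    (hb : ∀ i j : Q, ((η i j : ℂ) * (η j i : ℂ))
      = Complex.exp (-(2 * Real.pi * Complex.I) * Δ i j))
    (hc : ∀ i : Q, η i 0 = 1 ∧ η 0 i = 1) :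
    (∀ i j k l : Q,
      μ i j k * (μ i j (k + l))⁻¹ * μ i (j + k) l * (μ (i + j) k l)⁻¹ * μ j k l = 1) ∧
    (∀ i j k : Q,
      (μ i j k)⁻¹ * η i (j + k) * (μ j k i)⁻¹ = η i j * (μ j i k)⁻¹ * η i k) ∧
    (∀ i j k : Q,
      μ i j k * η (i + j) k * μ k i j = η j k * μ i k j * η i k) ∧
    (∀ i j : Q, μ i j 0 = 1 ∧ μ i 0 j = 1 ∧ μ 0 i j = 1) ∧
    (∀ i : Q, η i 0 = 1 ∧ η 0 i = 1) ∧
    (∀ i j k : Q, μ i j k = μ j i k) := by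
  refine ⟨?_, ?_, ?_, ?_, hc, ?_⟩
  · intro i j k l
    rw [ha]
    apply Units.ext
    simp only [hμ, Units.val_mul, Units.val_inv_eq_inv_val, add_assoc]
    field_simp
    ring_nf
    simp
  · intro i j k
    have key : ((η i (j + k) : ℂ)) * (η (j + k) i : ℂ)
        = (η i j : ℂ) * (η j i : ℂ) * ((η i k : ℂ) * (η k i : ℂ)) := by
      obtain ⟨m, hm⟩ := (hΔbil i j k).2
      rw [hb, hb, hb, hm, ← Complex.exp_add]
      rw [show -(2 * (Real.pi:ℂ) * Complex.I) * (Δ i j + Δ i k + ↑m)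
          = -(2 * (Real.pi:ℂ) * Complex.I) * Δ i j
            + -(2 * (Real.pi:ℂ) * Complex.I) * Δ i k + (-m : ℤ) * (2 * (Real.pi:ℂ) * Complex.I) by
        push_cast; ring]
      rw [Complex.exp_add, Complex.exp_int_mul_two_pi_mul_I, mul_one]
    apply Units.ext
    simp only [hμ, Units.val_mul, Units.val_inv_eq_inv_val, mul_inv_rev, inv_inv,
      add_comm j i]
    field_simp
    linear_combination key
  · intro i j k
    apply Units.ext
    simp only [hμ, Units.val_mul, Units.val_inv_eq_inv_val, add_comm k i]
    field_simp
  · intro i j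
    refine ⟨?_, ?_, ?_⟩ <;>
      simp [hμ, (hc _).1, (hc _).2]
  · intro i j k
    rw [hμ, hμ, add_comm j i, mul_right_comm]
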